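/- Let G be a pro-p group and N a closed normal subgroup. Then N is powerfully embedded in G if and only if NK/K is powerfully embedded in G/K for every open normal subgroup K of G. -/

import Mathlib

/-- The subgroup generated by `k`-th powers of elements of `N`. -/
def sPow {G : Type*} [Group G] (N : Subgroup G) (k : ℕ) : Subgroup G :=
  Subgroup.closure ((· ^ k) '' (N : Set G))

/-- A pro-`p` group: a profinite group all of whose continuous finite quotients
are `p`-groups. -/
def IsProPGroup (p : ℕ) (H : Type*) [Group H] [TopologicalSpace H] [IsTopologicalGroup H] : Prop :=
  CompactSpace H ∧ TotallyDisconnectedSpace H ∧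
    ∀ U : Subgroup H, IsOpen (U : Set H) → IsPGroup p (H ⧸ U.normalCore)

/-- `sPow` commutes with `map`. -/
lemma sPow_map {G H : Type*} [Group G] [Group H] (f : G →* H) (N : Subgroup G) (k : ℕ) :
    (sPow N k).map f = sPow (N.map f) k := by
  unfold sPow
  rw [MonoidHom.map_closure]
  congr 1
  rw [Set.image_image]
  ext y
  constructor
  · rintro ⟨a, ha, rfl⟩
    exact ⟨f a, ⟨a, ha, rfl⟩, (map_pow f a k).symm⟩
  · rintro ⟨b, ⟨a, ha, rfl⟩, rfl⟩
    exact ⟨a, ha, map_pow f a k⟩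

theorem stmt_19 {p : ℕ} (hp : p.Prime) (hodd : Odd p)
    {G : Type*} [Group G] [TopologicalSpace G] [IsTopologicalGroup G]
    (hpro : IsProPGroup p G)
    (N : Subgroup G) [N.Normal] (hclosed : IsClosed (N : Set G)) :
    (⁅N, (⊤ : Subgroup G)⁆ ≤ (sPow N p).topologicalClosure) ↔
      ∀ (K : Subgroup G) [K.Normal], IsOpen (K : Set G) →
        ⁅N.map (QuotientGroup.mk' K), (⊤ : Subgroup (G ⧸ K))⁆ ≤
          sPow (N.map (QuotientGroup.mk' K)) p := by
  obtain ⟨hcomp, hdisc, -⟩ := hpro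
  haveI : T2Space G := IsTopologicalGroup.t2Space_iff_one_closed.mpr isClosed_singleton
  constructor
  · intro h K _ hK
    set π := QuotientGroup.mk' K with hπ
    have hsur : Function.Surjective π := QuotientGroup.mk'_surjective K
    have hmap : ⁅N.map π, (⊤ : Subgroup (G ⧸ K))⁆ = (⁅N, (⊤ : Subgroup G)⁆).map π := by
      rw [Subgroup.map_commutator, Subgroup.map_top_of_surjective π hsur]
    rw [hmap, Subgroup.map_le_iff_le_comap]
    refine le_trans (le_trans h (Subgroup.topologicalClosure_minimal _ ?_ ?_)) le_rfl
    · rw [← Subgroup.map_le_iff_le_comap, sPow_map]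
    · refine Subgroup.isClosed_of_isOpen _ (Subgroup.isOpen_mono ?_ hK)
      intro k hk
      simp only [Subgroup.mem_comap, hπ, QuotientGroup.mk'_apply]
      rw [QuotientGroup.eq_one_iff _ |>.mpr hk]
      exact Subgroup.one_mem _
  · intro h x hx
    have hxc : x ∈ closure ((sPow N p : Subgroup G) : Set G) := by
      rw [mem_closure_iff]
      intro U hU hxU
      have hW : IsOpen ((fun g => x * g) ⁻¹' U) :=
        hU.preimage (continuous_mul_left x)
      have h1W : (1 : G) ∈ (fun g => x * g) ⁻¹' U := by simpa using hxU
      obtain ⟨V, hVclopen, h1V, hVW⟩ := compact_exists_isClopen_in_isOpen hW h1W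
      obtain ⟨K, hKV⟩ :=
        IsTopologicalGroup.exist_openNormalSubgroup_sub_clopen_nhds_of_one hVclopen h1V
      set π := QuotientGroup.mk' K.toSubgroup
      have hKle := h K.toSubgroup K.toOpenSubgroup.isOpen
      have hπx : π x ∈ ⁅N.map π, (⊤ : Subgroup (G ⧸ K.toSubgroup))⁆ := by
        have : π x ∈ (⁅N, (⊤ : Subgroup G)⁆).map π := Subgroup.mem_map_of_mem π hx
        rwa [Subgroup.map_commutator,
          Subgroup.map_top_of_surjective π (QuotientGroup.mk'_surjective _)] at this
      have := hKle hπx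
      rw [← sPow_map] at this
      obtain ⟨y, hy, hyx⟩ := this
      refine ⟨y, ?_, hy⟩
      have hmem : x⁻¹ * y ∈ K.toSubgroup := by
        have : π (x⁻¹ * y) = 1 := by
          rw [map_mul, map_inv, ← hyx]
          exact inv_mul_cancel _
        exact (QuotientGroup.eq_one_iff _).mp this
      have : x⁻¹ * y ∈ V := hKV hmem
      have := hVW this
      simpa using this
    exact hxc
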